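/- Let r ≥ 1, let V be a finite set with |V| = n, and let E be a finite family of r-element subsets of V. Then there exists a subfamily E' ⊆ E with |E'| ≤ C(n, r−1) (the binomial coefficient n choose r−1) such that every 2-coloring of V under which no hyperedge of E' is monochromatic also leaves no hyperedge of E monochromatic; in particular, (V, E) is properly 2-colorable if and only if (V, E') is properly 2-colorable. -/

import Mathlib

namespace Sparsify

set_option linter.unusedSectionVars false

variable {V : Type} [Fintype V] [DecidableEq V]

abbrev M (V : Type) := (V → ZMod 2) → ZMod 2

def X (v : V) : M V := fun c => c v

def P (e : Finset V) : M V := ∏ v ∈ e, X v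
def Q (e : Finset V) : M V := ∏ v ∈ e, (1 + X v)
def φ (e : Finset V) : M V := P e + Q e

lemma two_zero : (2 : M V) = 0 := by
  funext c
  show (2 : ZMod 2) = 0
  decide

lemma add_self_zero (a : M V) : a + a = 0 := by
  have h : a + a = 2 * a := by ring
  rw [h, two_zero, zero_mul]

lemma neg_self (a : M V) : -a = a := by
  have := add_self_zero a
  exact neg_eq_of_add_eq_zero_left this

lemma P_apply (e : Finset V) (c : V → ZMod 2) : P e c = ∏ v ∈ e, c v := by
  simp [P, X, Finset.prod_apply]

lemma Q_apply (e : Finset V) (c : V → ZMod 2) : Q e c = ∏ v ∈ e, (1 + c v) := by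
  simp [Q, X, Finset.prod_apply]

lemma zmod2_cases (a : ZMod 2) : a = 0 ∨ a = 1 := by revert a; decide

lemma mono_iff (e : Finset V) (he : e.Nonempty) (c : V → ZMod 2) :
    (∃ k, ∀ v ∈ e, c v = k) ↔ φ e c = 1 := by
  have hφ : φ e c = (∏ v ∈ e, c v) + ∏ v ∈ e, (1 + c v) := by
    simp [φ, P_apply, Q_apply]
  constructor
  · rintro ⟨k, hk⟩
    rcases zmod2_cases k with rfl | rfl
    · rw [hφ, Finset.prod_eq_zero he.choose_spec (by rw [hk _ he.choose_spec]),
        Finset.prod_eq_one (fun v hv => by rw [hk v hv]; decide), zero_add]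
    · rw [hφ, Finset.prod_eq_one (fun v hv => hk v hv),
        Finset.prod_eq_zero he.choose_spec (by rw [hk _ he.choose_spec]; decide), add_zero]
  · intro h1
    by_contra hmono
    -- mixed: exists v with c v = 0 and w with c w = 1
    have h0 : ¬ (∀ v ∈ e, c v = 0) := fun h => hmono ⟨0, h⟩
    have h1' : ¬ (∀ v ∈ e, c v = 1) := fun h => hmono ⟨1, h⟩
    push_neg at h0 h1'
    obtain ⟨v0, hv0, hv0'⟩ := h0
    obtain ⟨v1, hv1, hv1'⟩ := h1'
    have hc0 : c v1 = 0 := (zmod2_cases (c v1)).resolve_right hv1'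
    have hc1 : c v0 = 1 := (zmod2_cases (c v0)).resolve_left hv0'
    have e1 : (∏ v ∈ e, c v) = 0 := Finset.prod_eq_zero hv1 hc0
    have e2 : (∏ v ∈ e, (1 + c v)) = 0 := Finset.prod_eq_zero hv0 (by rw [hc1]; decide)
    rw [hφ, e1, e2] at h1
    exact absurd h1 (by decide)


-- the modified edge: replace the elements of t ⊆ f by their partners under a
def repl (f t : Finset V) (a : V → V) : Finset V := (f \ t) ∪ t.image a

lemma repl_empty (f : Finset V) (a : V → V) : repl f ∅ a = f := by
  simp [repl]

lemma repl_disj {f t : Finset V} (ht : t ⊆ f) {a : V → V}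
    (hav : ∀ v ∈ f, a v ∉ f) : Disjoint (f \ t) (t.image a) := by
  rw [Finset.disjoint_right]
  rintro u hu
  obtain ⟨v, hv, rfl⟩ := Finset.mem_image.mp hu
  intro hmem
  exact hav v (ht hv) (Finset.mem_sdiff.mp hmem).1

lemma repl_card {f t : Finset V} (ht : t ⊆ f) {a : V → V}
    (hinj : Set.InjOn a f) (hav : ∀ v ∈ f, a v ∉ f) :
    (repl f t a).card = f.card := by
  rw [repl, Finset.card_union_of_disjoint (repl_disj ht hav),
    Finset.card_sdiff_of_subset ht, Finset.card_image_of_injOn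
      (hinj.mono (fun x hx => ht hx))]
  have := Finset.card_le_card ht
  omega

lemma cube (f : Finset V) (a : V → V) (hinj : Set.InjOn a f)
    (hav : ∀ v ∈ f, a v ∉ f) :
    ∑ t ∈ f.powerset, φ (repl f t a) = 0 := by
  have key : ∀ Y : V → M V,
      (∑ t ∈ f.powerset, ∏ v ∈ repl f t a, Y v)
        = ∏ v ∈ f, (Y (a v) + Y v) := by
    intro Y
    rw [Finset.prod_add]
    apply Finset.sum_congr rfl
    intro t ht
    rw [Finset.mem_powerset] at ht
    rw [repl, Finset.prod_union (repl_disj ht hav),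
      Finset.prod_image (fun x hx y hy hxy => hinj (ht hx) (ht hy) hxy),
      mul_comm]
  have hP : (∑ t ∈ f.powerset, P (repl f t a)) = ∏ v ∈ f, (X (a v) + X v) := key X
  have hQ : (∑ t ∈ f.powerset, Q (repl f t a)) = ∏ v ∈ f, (X (a v) + X v) := by
    have hthis := key (fun v => 1 + X v)
    show ∑ t ∈ f.powerset, ∏ v ∈ repl f t a, (1 + X v) = _
    rw [hthis]
    apply Finset.prod_congr rfl
    intro v _
    have h2 : (1 : M V) + X (a v) + (1 + X v) = X (a v) + X v + 2 := by ring
    rw [h2, two_zero, add_zero]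
  calc ∑ t ∈ f.powerset, φ (repl f t a)
      = (∑ t ∈ f.powerset, P (repl f t a)) + ∑ t ∈ f.powerset, Q (repl f t a) := by
        rw [← Finset.sum_add_distrib]; rfl
    _ = 0 := by rw [hP, hQ]; exact add_self_zero _

lemma cube_expand (f : Finset V) (a : V → V) (hinj : Set.InjOn a f)
    (hav : ∀ v ∈ f, a v ∉ f) :
    φ f = ∑ t ∈ f.powerset.erase ∅, φ (repl f t a) := by
  have h0 := cube f a hinj hav
  have hmem : (∅ : Finset V) ∈ f.powerset := Finset.empty_mem_powerset f
  rw [← Finset.add_sum_erase _ _ hmem, repl_empty] at h0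
  have := neg_eq_of_add_eq_zero_left h0
  rw [← this, neg_self]


noncomputable def iota : V → ℕ := fun v => ((Fintype.equivFin V) v : ℕ)

lemma iota_inj : Function.Injective (iota (V := V)) := by
  intro x y h
  exact (Fintype.equivFin V).injective (Fin.val_injective h)

lemma iota_lt_card (v : V) : iota v < Fintype.card V := ((Fintype.equivFin V) v).isLt

noncomputable def Cnt (f : Finset V) (p : ℕ) : ℕ := (f.filter (fun v => iota v < p)).card

lemma Cnt_le_card (f : Finset V) (p : ℕ) : Cnt f p ≤ f.card :=
  Finset.card_le_card (Finset.filter_subset _ _)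

lemma Cnt_mono_set {f g : Finset V} (h : f ⊆ g) (p : ℕ) : Cnt f p ≤ Cnt g p :=
  Finset.card_le_card (Finset.filter_subset_filter _ h)

lemma Cnt_succ_le (f : Finset V) (p : ℕ) : Cnt f (p + 1) ≤ Cnt f p + 1 := by
  have hsub : f.filter (fun v => iota v < p + 1) ⊆
      f.filter (fun v => iota v < p) ∪ f.filter (fun v => iota v = p) := by
    intro v hv
    rw [Finset.mem_filter] at hv
    rcases Nat.lt_succ_iff_lt_or_eq.mp hv.2 with h | h
    · exact Finset.mem_union_left _ (Finset.mem_filter.mpr ⟨hv.1, h⟩)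
    · exact Finset.mem_union_right _ (Finset.mem_filter.mpr ⟨hv.1, h⟩)
  have hone : (f.filter (fun v => iota v = p)).card ≤ 1 := by
    apply Finset.card_le_one.mpr
    intro x hx y hy
    rw [Finset.mem_filter] at hx hy
    exact iota_inj (hx.2.trans hy.2.symm)
  calc Cnt f (p + 1) ≤ _ := Finset.card_le_card hsub
    _ ≤ (f.filter (fun v => iota v < p)).card + (f.filter (fun v => iota v = p)).card :=
        Finset.card_union_le _ _
    _ ≤ Cnt f p + 1 := by unfold Cnt; omega

def bad (f : Finset V) : Prop :=
  ∃ p ∈ Finset.range (2 * Fintype.card V + 2), p + 1 ≤ 2 * Cnt f p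

noncomputable instance : DecidablePred (bad (V := V)) := Classical.decPred _

lemma bad_iff (f : Finset V) : bad f ↔ ∃ p, p + 1 ≤ 2 * Cnt f p := by
  constructor
  · rintro ⟨p, _, hp⟩; exact ⟨p, hp⟩
  · rintro ⟨p, hp⟩
    have h1 : Cnt f p ≤ f.card := Cnt_le_card f p
    have h2 : f.card ≤ Fintype.card V := Finset.card_le_univ f
    exact ⟨p, Finset.mem_range.mpr (by omega), hp⟩

lemma card_below (k : ℕ) (hk : k ≤ Fintype.card V) :
    (Finset.univ.filter (fun v : V => iota v < k)).card = k := by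
  classical
  rcases Nat.eq_zero_or_pos k with rfl | hkpos
  · simp
  have hcpos : 0 < Fintype.card V := lt_of_lt_of_le hkpos hk
  have himg : (Finset.univ.filter (fun v : V => iota v < k))
      = (Finset.range k).image (fun i => (Fintype.equivFin V).symm ⟨i % Fintype.card V, Nat.mod_lt _ hcpos⟩) := by
    ext v
    simp only [Finset.mem_filter, Finset.mem_univ, true_and, Finset.mem_image, Finset.mem_range]
    constructor
    · intro hv
      refine ⟨iota v, hv, ?_⟩
      have : iota v % Fintype.card V = iota v := Nat.mod_eq_of_lt (iota_lt_card v)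
      simp only [this]
      have : (⟨iota v, iota_lt_card v⟩ : Fin (Fintype.card V)) = (Fintype.equivFin V) v := by
        apply Fin.ext; rfl
      rw [this, Equiv.symm_apply_apply]
    · rintro ⟨i, hi, rfl⟩
      have hikn : i % Fintype.card V = i := Nat.mod_eq_of_lt (by omega)
      show iota _ < k
      unfold iota
      rw [Equiv.apply_symm_apply]
      simp [hikn]; omega
  rw [himg, Finset.card_image_of_injOn ?hinj, Finset.card_range]
  case hinj =>
    intro x hx y hy hxy
    rw [Finset.coe_range, Set.mem_Iio] at hx hy
    have h1 := (Fintype.equivFin V).symm.injective hxy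
    have h2 : x % Fintype.card V = y % Fintype.card V := congrArg Fin.val h1
    rw [Nat.mod_eq_of_lt (by omega), Nat.mod_eq_of_lt (by omega)] at h2
    exact h2

lemma sdr : ∀ (m : ℕ) (f : Finset V), f.card = m → ¬ bad f →
    ∃ a : V → V, Set.InjOn a f ∧ (∀ v ∈ f, a v ∉ f) ∧ (∀ v ∈ f, iota (a v) < iota v) := by
  intro m
  induction m with
  | zero =>
    intro f hf _
    rw [Finset.card_eq_zero] at hf
    subst hf
    exact ⟨id, by simp [Set.InjOn], by simp, by simp⟩
  | succ m IH =>
    intro f hf hbad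
    have hne : f.Nonempty := Finset.card_pos.mp (by omega)
    obtain ⟨v0, hv0, hmax⟩ := Finset.exists_max_image f iota hne
    set f' := f.erase v0 with hf'
    have hefsub : f' ⊆ f := Finset.erase_subset _ _
    have hcard' : f'.card = m := by
      rw [hf', Finset.card_erase_of_mem hv0, hf]
      omega
    have hbad' : ¬ bad f' := by
      intro hb
      rcases (bad_iff f').mp hb with ⟨p, hp⟩
      exact hbad ((bad_iff f).mpr ⟨p, le_trans hp (by
        have := Cnt_mono_set hefsub p; omega)⟩)
    obtain ⟨a', hinj', hav', hlt'⟩ := IH f' hcard' hbad'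
    -- bound: 2 * f.card ≤ iota v0 + 1
    have hcnt_all : Cnt f (iota v0 + 1) = f.card := by
      unfold Cnt
      congr 1
      apply Finset.filter_true_of_mem
      intro v hv
      exact Nat.lt_succ_of_le (hmax v hv)
    have hbound : 2 * f.card ≤ iota v0 + 1 := by
      by_contra hcon
      exact hbad ((bad_iff f).mpr ⟨iota v0 + 1, by omega⟩)
    -- find b below v0 avoiding f and the image of a'
    set Forb : Finset V := f' ∪ f'.image a' with hForb
    have hforb_card : Forb.card ≤ 2 * m := by
      calc Forb.card ≤ f'.card + (f'.image a').card := Finset.card_union_le _ _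
        _ ≤ m + m := by
            have h2 : (f'.image a').card ≤ f'.card := Finset.card_image_le
            omega
        _ = 2 * m := by ring
    have hbelow : (Finset.univ.filter (fun v : V => iota v < iota v0)).card = iota v0 :=
      card_below _ (iota_lt_card v0).le
    have hex : ∃ b, b ∈ (Finset.univ.filter (fun v : V => iota v < iota v0)) \ Forb := by
      apply Finset.Nonempty.exists_mem
      rw [← Finset.card_pos]
      have hthis : (Finset.univ.filter (fun v : V => iota v < iota v0)).card - Forb.card
          ≤ ((Finset.univ.filter (fun v : V => iota v < iota v0)) \ Forb).card :=
        Finset.le_card_sdiff _ _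
      rw [hbelow] at hthis
      have hf1 : f.card = m + 1 := hf
      omega
    obtain ⟨b, hb⟩ := hex
    rw [Finset.mem_sdiff, Finset.mem_filter] at hb
    obtain ⟨⟨-, hblt⟩, hbforb⟩ := hb
    have hbne : b ≠ v0 := fun h => by rw [h] at hblt; omega
    have hbf : b ∉ f := fun h =>
      hbforb (Finset.mem_union_left _ (Finset.mem_erase.mpr ⟨hbne, h⟩))
    have hbim : b ∉ f'.image a' := fun h => hbforb (Finset.mem_union_right _ h)
    refine ⟨Function.update a' v0 b, ?_, ?_, ?_⟩
    · intro x hx y hy hxy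
      rw [Finset.mem_coe] at hx hy
      by_cases hxv : x = v0 <;> by_cases hyv : y = v0
      · rw [hxv, hyv]
      · subst hxv
        rw [Function.update_self, Function.update_of_ne hyv] at hxy
        exfalso
        apply hbim
        exact Finset.mem_image.mpr ⟨y, Finset.mem_erase.mpr ⟨hyv, hy⟩, hxy.symm⟩
      · subst hyv
        rw [Function.update_self, Function.update_of_ne hxv] at hxy
        exfalso
        apply hbim
        exact Finset.mem_image.mpr ⟨x, Finset.mem_erase.mpr ⟨hxv, hx⟩, hxy⟩
      · rw [Function.update_of_ne hxv, Function.update_of_ne hyv] at hxy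
        exact hinj' (Finset.mem_coe.mpr (Finset.mem_erase.mpr ⟨hxv, hx⟩))
          (Finset.mem_coe.mpr (Finset.mem_erase.mpr ⟨hyv, hy⟩)) hxy
    · intro v hv
      by_cases hvv : v = v0
      · subst hvv; rw [Function.update_self]; exact hbf
      · rw [Function.update_of_ne hvv]
        have hv' : v ∈ f' := Finset.mem_erase.mpr ⟨hvv, hv⟩
        intro hmem
        by_cases hva : a' v = v0
        · have := hlt' v hv'
          rw [hva] at this
          have hle := hmax v hv
          omega
        · exact hav' v hv' (Finset.mem_erase.mpr ⟨hva, hmem⟩)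
    · intro v hv
      by_cases hvv : v = v0
      · subst hvv; rw [Function.update_self]; exact hblt
      · rw [Function.update_of_ne hvv]
        exact hlt' v (Finset.mem_erase.mpr ⟨hvv, hv⟩)


noncomputable def BadF (r : ℕ) : Finset (Finset V) :=
  (Finset.univ.powersetCard r).filter bad

noncomputable def SpanB (r : ℕ) : Submodule (ZMod 2) (M V) :=
  Submodule.span (ZMod 2) (↑((BadF (V := V) r).image φ))

-- crossing point data
lemma crossing {f : Finset V} (hb : ∃ p, p + 1 ≤ 2 * Cnt f p) :
    1 ≤ Nat.find hb ∧ 2 * Cnt f (Nat.find hb) = Nat.find hb + 1 ∧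
      Nat.find hb ≤ Fintype.card V := by
  set P := Nat.find hb with hP
  have hq : P + 1 ≤ 2 * Cnt f P := Nat.find_spec hb
  have hP1 : 1 ≤ P := by
    rcases Nat.eq_zero_or_pos P with h0 | h
    · exfalso
      rw [h0] at hq
      have : Cnt f 0 = 0 := by
        unfold Cnt
        rw [Finset.filter_false_of_mem (fun v _ => by omega), Finset.card_empty]
      omega
    · exact h
  have hmin : ¬ (P - 1 + 1 ≤ 2 * Cnt f (P - 1)) := Nat.find_min hb (by omega)
  have hsucc : Cnt f (P - 1 + 1) ≤ Cnt f (P - 1) + 1 := Cnt_succ_le f (P - 1)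
  have hPP : P - 1 + 1 = P := by omega
  rw [hPP] at hsucc
  have hexact : 2 * Cnt f P = P + 1 := by omega
  refine ⟨hP1, hexact, ?_⟩
  by_contra hgt
  push_neg at hgt
  have hcntV : Cnt f (Fintype.card V) = f.card := by
    unfold Cnt
    rw [Finset.filter_true_of_mem (fun v _ => iota_lt_card v)]
  have hcle : Cnt f P ≤ f.card := Cnt_le_card f P
  have : Fintype.card V + 1 ≤ 2 * Cnt f (Fintype.card V) := by omega
  have := Nat.find_min hb hgt  -- card V < P, so ¬ q (card V)
  omega

-- f ∩ prefix = filter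
lemma inter_pre (f : Finset V) (p : ℕ) :
    f ∩ Finset.univ.filter (fun v => iota v < p) = f.filter (fun v => iota v < p) := by
  ext v
  simp [Finset.mem_filter, Finset.mem_inter]

open Classical in
noncomputable def Pf (f : Finset V) : ℕ :=
  if h : ∃ p, p + 1 ≤ 2 * Cnt f p then Nat.find h else 0

noncomputable def PreF (f : Finset V) : Finset V :=
  Finset.univ.filter (fun v => iota v < Pf f)

noncomputable def Psi (f : Finset V) : Finset V := (f \ PreF f) ∪ (PreF f \ f)

lemma Pf_eq {f : Finset V} (hex : ∃ p, p + 1 ≤ 2 * Cnt f p) : Pf f = Nat.find hex := by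
  rw [Pf, dif_pos hex]

lemma Cnt_Psi {f : Finset V} (hb : bad f) {p : ℕ} (hp : p ≤ Pf f) :
    Cnt (Psi f) p + Cnt f p = p := by
  have hex : ∃ q, q + 1 ≤ 2 * Cnt f q := (bad_iff f).mp hb
  have hPle : Pf f ≤ Fintype.card V := by
    rw [Pf_eq hex]; exact (crossing hex).2.2
  have hvP : ∀ v : V, v ∈ PreF f ↔ iota v < Pf f := fun v => by
    rw [PreF, Finset.mem_filter]
    simp
  have hfilt : (Psi f).filter (fun v => iota v < p) =
      (Finset.univ.filter (fun v => iota v < p)) \ f := by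
    ext v
    simp only [Psi, Finset.mem_filter, Finset.mem_union, Finset.mem_sdiff,
      Finset.mem_univ, true_and, hvP v]
    constructor
    · rintro ⟨⟨hvf, hvpre⟩ | ⟨hvP', hvf⟩, h2⟩
      · exact absurd (lt_of_lt_of_le h2 hp) hvpre
      · exact ⟨h2, hvf⟩
    · rintro ⟨h1, h2⟩
      exact ⟨Or.inr ⟨lt_of_lt_of_le h1 hp, h2⟩, h1⟩
  have hcb : (Finset.univ.filter (fun v : V => iota v < p)).card = p :=
    card_below p (le_trans hp hPle)
  have e1 := Finset.card_sdiff_add_card_inter (Finset.univ.filter (fun v : V => iota v < p)) f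
  have e2 : (Finset.univ.filter (fun v : V => iota v < p) ∩ f).card = Cnt f p := by
    rw [Finset.inter_comm, inter_pre]; rfl
  have e3 : Cnt (Psi f) p = ((Finset.univ.filter (fun v : V => iota v < p)) \ f).card := by
    unfold Cnt
    rw [hfilt]
  omega

lemma Psi_card {f : Finset V} (hb : bad f) : (Psi f).card + 1 = f.card := by
  have hex : ∃ q, q + 1 ≤ 2 * Cnt f q := (bad_iff f).mp hb
  obtain ⟨hP1, hexact, hPle⟩ := crossing hex
  rw [← Pf_eq hex] at hP1 hexact hPle
  have hdisj : Disjoint (f \ PreF f) (PreF f \ f) := by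
    rw [Finset.disjoint_left]
    intro a ha hb'
    exact (Finset.mem_sdiff.mp hb').2 (Finset.mem_sdiff.mp ha).1
  have e1 := Finset.card_sdiff_add_card_inter f (PreF f)
  have e2 := Finset.card_sdiff_add_card_inter (PreF f) f
  have e3 : (PreF f ∩ f).card = (f ∩ PreF f).card := by rw [Finset.inter_comm]
  have e4 : (f ∩ PreF f).card = Cnt f (Pf f) := by rw [PreF, inter_pre]; rfl
  have e5 : (PreF f).card = Pf f := card_below _ hPle
  have e6 : (Psi f).card = (f \ PreF f).card + (PreF f \ f).card := by
    rw [Psi, Finset.card_union_of_disjoint hdisj]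
  omega

-- recover Pf f from Psi f : it is the least p with 2 * Cnt (Psi f) p + 1 ≤ p
lemma Pf_recover {f : Finset V} (hb : bad f) :
    (2 * Cnt (Psi f) (Pf f) + 1 ≤ Pf f) ∧ ∀ p < Pf f, ¬ (2 * Cnt (Psi f) p + 1 ≤ p) := by
  have hex : ∃ q, q + 1 ≤ 2 * Cnt f q := (bad_iff f).mp hb
  obtain ⟨hP1, hexact, hPle⟩ := crossing hex
  rw [← Pf_eq hex] at hP1 hexact hPle
  constructor
  · have := Cnt_Psi hb (le_refl (Pf f))
    omega
  · intro p hp hcon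
    have h1 := Cnt_Psi hb (le_of_lt hp)
    have h2 : ¬ (p + 1 ≤ 2 * Cnt f p) := by
      rw [Pf_eq hex] at hp
      exact Nat.find_min hex hp
    omega

lemma Psi_recoverF {f : Finset V} (hb : bad f) :
    f = (Psi f \ PreF f) ∪ (PreF f \ Psi f) := by
  ext v
  simp only [Psi, Finset.mem_union, Finset.mem_sdiff]
  by_cases h1 : v ∈ f <;> by_cases h2 : v ∈ PreF f <;> simp [h1, h2]

lemma card_BadF_le (r : ℕ) (hr : 1 ≤ r) :
    (BadF (V := V) r).card ≤ (Fintype.card V).choose (r - 1) := by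
  have := Finset.card_powersetCard (r - 1) (Finset.univ : Finset V)
  rw [Finset.card_univ] at this
  rw [← this]
  apply Finset.card_le_card_of_injOn Psi
  · -- maps into powersetCard (r-1)
    intro f hf
    rw [BadF, Finset.mem_coe, Finset.mem_filter, Finset.mem_powersetCard] at hf
    obtain ⟨⟨-, hcard⟩, hbad⟩ := hf
    rw [Finset.mem_coe, Finset.mem_powersetCard]
    refine ⟨Finset.subset_univ _, ?_⟩
    have := Psi_card hbad
    omega
  · -- injective on BadF
    intro f1 hf1 f2 hf2 heq
    rw [Finset.mem_coe, BadF, Finset.mem_filter] at hf1 hf2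
    have hb1 := hf1.2
    have hb2 := hf2.2
    -- the crossing points agree
    have hPeq : Pf f1 = Pf f2 := by
      obtain ⟨hx1, hmin1⟩ := Pf_recover hb1
      obtain ⟨hx2, hmin2⟩ := Pf_recover hb2
      rw [heq] at hx1 hmin1
      by_contra hne
      rcases Nat.lt_or_ge (Pf f1) (Pf f2) with h | h
      · exact hmin2 _ h hx1
      · exact hmin1 _ (lt_of_le_of_ne h (Ne.symm hne)) hx2
    have hPre : PreF f1 = PreF f2 := by
      rw [PreF, PreF, hPeq]
    rw [Psi_recoverF hb1, Psi_recoverF hb2, heq, hPre]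

lemma straighten (r : ℕ) :
    ∀ (N : ℕ) (f : Finset V), f.card = r → (∑ v ∈ f, iota v) ≤ N →
      φ f ∈ SpanB (V := V) r := by
  intro N
  induction N using Nat.strong_induction_on with
  | _ N IH =>
    intro f hcard hm
    by_cases hb : bad f
    · apply Submodule.subset_span
      rw [Finset.coe_image]
      exact Set.mem_image_of_mem φ (by
        rw [Finset.mem_coe, BadF, Finset.mem_filter, Finset.mem_powersetCard]
        exact ⟨⟨Finset.subset_univ f, hcard⟩, hb⟩)
    · obtain ⟨a, hinj, hav, hlt⟩ := sdr f.card f rfl hb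
      rw [cube_expand f a hinj hav]
      apply Submodule.sum_mem
      intro t ht
      rw [Finset.mem_erase, Finset.mem_powerset] at ht
      obtain ⟨htne, hts⟩ := ht
      have htne' : t.Nonempty := Finset.nonempty_iff_ne_empty.mpr htne
      have hmeas : (∑ v ∈ repl f t a, iota v) < ∑ v ∈ f, iota v := by
        have hdisj := repl_disj hts hav
        rw [repl, Finset.sum_union hdisj,
          Finset.sum_image (fun x hx y hy hxy => hinj (hts hx) (hts hy) hxy)]
        have hstrict : (∑ v ∈ t, iota (a v)) < ∑ v ∈ t, iota v :=
          Finset.sum_lt_sum_of_nonempty htne' (fun v hv => hlt v (hts hv))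
        have hsplit : (∑ v ∈ f \ t, iota v) + ∑ v ∈ t, iota v = ∑ v ∈ f, iota v :=
          Finset.sum_sdiff hts
        omega
      have hcard2 : (repl f t a).card = r := by rw [repl_card hts hinj hav, hcard]
      rcases Nat.eq_zero_or_pos N with rfl | hNpos
      · omega
      · exact IH (N - 1) (by omega) _ hcard2 (by omega)


def F2 : Fin 2 → ZMod 2 := fun k => if k = 1 then 1 else 0

lemma F2_inj : Function.Injective F2 := by decide

lemma mono_transfer (e : Finset V) (he : e.Nonempty) (c : V → Fin 2) :
    (∃ k, ∀ v ∈ e, c v = k) ↔ (∃ k, ∀ v ∈ e, F2 (c v) = k) := by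
  constructor
  · rintro ⟨k, hk⟩
    exact ⟨F2 k, fun v hv => by rw [hk v hv]⟩
  · rintro ⟨k, hk⟩
    obtain ⟨v0, hv0⟩ := he
    refine ⟨c v0, fun v hv => ?_⟩
    exact F2_inj ((hk v hv).trans (hk v0 hv0).symm)

end Sparsify

open Sparsify in
theorem uniform_hypergraph_sparsification {V : Type} [Fintype V]
    [DecidableEq V] (r n : ℕ) (hr : 1 ≤ r) (hn : Fintype.card V = n)
    (E : Finset (Finset V)) (hE : ∀ e ∈ E, e.card = r) :
    ∃ E' ⊆ E, E'.card ≤ n.choose (r - 1) ∧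
      (∀ c : V → Fin 2,
        (∀ e ∈ E', ¬ ∃ k, ∀ v ∈ e, c v = k) → (∀ e ∈ E, ¬ ∃ k, ∀ v ∈ e, c v = k)) ∧
      ((∃ c : V → Fin 2, ∀ e ∈ E, ¬ ∃ k, ∀ v ∈ e, c v = k) ↔
        (∃ c : V → Fin 2, ∀ e ∈ E', ¬ ∃ k, ∀ v ∈ e, c v = k)) := by
  classical
  subst hn
  set s : Set (M V) := φ '' (↑E : Set (Finset V)) with hs
  obtain ⟨b, hbsub, hbspan, hbind⟩ := exists_linearIndependent (ZMod 2) s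
  have hsfin : s.Finite := E.finite_toSet.image φ
  have hbfin : b.Finite := hsfin.subset hbsub
  haveI : Fintype b := hbfin.fintype
  -- b is inside SpanB r
  have hEspan : ∀ e ∈ E, φ e ∈ SpanB (V := V) r :=
    fun e he => straighten r (∑ v ∈ e, iota v) e (hE e he) le_rfl
  have hsub_spanB : s ⊆ (SpanB (V := V) r : Set (M V)) := by
    rintro x ⟨e, he, rfl⟩
    exact hEspan e (Finset.mem_coe.mp he)
  -- card of b bounded
  have hrank : Module.finrank (ZMod 2) (Submodule.span (ZMod 2) b) = b.toFinset.card :=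
    finrank_span_set_eq_card hbind
  have hble : Submodule.span (ZMod 2) b ≤ SpanB (V := V) r := by
    rw [hbspan, Submodule.span_le]
    exact hsub_spanB
  have hrankB : Module.finrank (ZMod 2) (SpanB (V := V) r)
      ≤ ((BadF (V := V) r).image φ).card := by
    have := finrank_span_finset_le_card (R := ZMod 2) ((BadF (V := V) r).image φ)
    exact this
  have hbcard : b.toFinset.card ≤ (Fintype.card V).choose (r - 1) := by
    have h1 : Module.finrank (ZMod 2) (Submodule.span (ZMod 2) b)
        ≤ Module.finrank (ZMod 2) (SpanB (V := V) r) := Submodule.finrank_mono hble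
    have h2 : ((BadF (V := V) r).image φ).card ≤ (BadF (V := V) r).card :=
      Finset.card_image_le
    have h3 := card_BadF_le (V := V) r hr
    omega
  -- representatives
  set pick : M V → Finset V :=
    fun m => if h : ∃ e ∈ E, φ e = m then h.choose else ∅ with hpick
  have hpick_spec : ∀ m ∈ b, pick m ∈ E ∧ φ (pick m) = m := by
    intro m hm
    have hmem : m ∈ s := hbsub hm
    obtain ⟨e, he, rfl⟩ := hmem
    have hex : ∃ e' ∈ E, φ e' = φ e := ⟨e, Finset.mem_coe.mp he, rfl⟩
    rw [hpick]
    simp only [dif_pos hex]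
    exact ⟨hex.choose_spec.1, hex.choose_spec.2⟩
  set E' : Finset (Finset V) := b.toFinset.image pick with hE'
  have hE'sub : E' ⊆ E := by
    intro x hx
    rw [hE', Finset.mem_image] at hx
    obtain ⟨m, hm, rfl⟩ := hx
    exact (hpick_spec m (Set.mem_toFinset.mp hm)).1
  have hE'card : E'.card ≤ (Fintype.card V).choose (r - 1) :=
    le_trans Finset.card_image_le hbcard
  -- span property : every φ e is in span of φ '' E'
  have hspanE' : ∀ e ∈ E, φ e ∈ Submodule.span (ZMod 2) (φ '' (↑E' : Set (Finset V))) := by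
    intro e he
    have h1 : φ e ∈ Submodule.span (ZMod 2) s :=
      Submodule.subset_span ⟨e, Finset.mem_coe.mpr he, rfl⟩
    rw [← hbspan] at h1
    refine Submodule.span_mono ?_ h1
    intro m hm
    refine ⟨pick m, ?_, (hpick_spec m hm).2⟩
    rw [Finset.mem_coe, hE']
    exact Finset.mem_image_of_mem pick (Set.mem_toFinset.mpr hm)
  have himp : ∀ c : V → Fin 2,
      (∀ e ∈ E', ¬ ∃ k, ∀ v ∈ e, c v = k) → (∀ e ∈ E, ¬ ∃ k, ∀ v ∈ e, c v = k) := by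
    intro c hprop e he
    set d : V → ZMod 2 := fun v => F2 (c v) with hd
    have hne : ∀ e' ∈ E, e'.Nonempty := fun e' he' =>
      Finset.card_pos.mp (by rw [hE e' he']; omega)
    -- φ f d = 0 for all f in E'
    have hker : Submodule.span (ZMod 2) (φ '' (↑E' : Set (Finset V)))
        ≤ LinearMap.ker (LinearMap.proj (R := ZMod 2) (φ := fun _ : V → ZMod 2 => ZMod 2) d) := by
      rw [Submodule.span_le]
      rintro x ⟨f, hf, rfl⟩
      rw [SetLike.mem_coe, LinearMap.mem_ker]
      have hfE : f ∈ E := hE'sub (Finset.mem_coe.mp hf)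
      have hmono := hprop f (Finset.mem_coe.mp hf)
      rw [mono_transfer f (hne f hfE) c] at hmono
      have : ¬ (φ f d = 1) := by
        intro hc1
        exact hmono ((mono_iff f (hne f hfE) d).mpr hc1)
      show φ f d = 0
      rcases zmod2_cases (φ f d) with h | h
      · exact h
      · exact absurd h this
    have hed : φ e d = 0 := hker (hspanE' e he)
    rw [mono_transfer e (hne e he) c]
    intro hmono
    rw [mono_iff e (hne e he) d] at hmono
    rw [hmono] at hed
    exact one_ne_zero hed
  refine ⟨E', hE'sub, hE'card, himp, ?_, ?_⟩
  · rintro ⟨c, hc⟩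
    exact ⟨c, fun e he => hc e (hE'sub he)⟩
  · rintro ⟨c, hc⟩
    exact ⟨c, himp c hc⟩
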